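/- arXiv:2305.09462 — 4 statements merged into one kernel-verified Lean document; each statement's English description precedes it below -/
import Mathlib

section
/- The solutions (a, b) of the unit equation a + b = 1 with a and b both units of ℤ[1/2] are exactly (2, -1), (-1, 2), and (1/2, 1/2). -/
/-- Membership in the subring `ℤ[1/2]` of `ℚ`: rationals whose denominator
is a power of `2`. -/
def InZHalf (q : ℚ) : Prop := ∃ (a : ℤ) (n : ℕ), q = a / 2 ^ n

/-- `q` is a unit of the ring `ℤ[1/2]`. -/
def IsUnitZHalf (q : ℚ) : Prop := InZHalf q ∧ ∃ r : ℚ, InZHalf r ∧ q * r = 1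

lemma inZHalf_zpow (n : ℤ) : InZHalf ((2:ℚ) ^ n) := by
  rcases le_or_gt 0 n with h | h
  · refine ⟨2 ^ n.toNat, 0, ?_⟩
    have hn : (n.toNat : ℤ) = n := Int.toNat_of_nonneg h
    rw [← hn, zpow_natCast]
    norm_num
    omega
  · refine ⟨1, (-n).toNat, ?_⟩
    have : ((-n).toNat : ℤ) = -n := Int.toNat_of_nonneg (by omega)
    rw [← zpow_natCast (2:ℚ), this]
    rw [zpow_neg]
    field_simp
    simp
lemma inZHalf_neg {q : ℚ} (h : InZHalf q) : InZHalf (-q) := by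
  obtain ⟨a, n, rfl⟩ := h
  exact ⟨-a, n, by push_cast; ring⟩

lemma unit_iff (q : ℚ) : IsUnitZHalf q ↔ ∃ n : ℤ, q = 2 ^ n ∨ q = -2 ^ n := by
  constructor
  · rintro ⟨⟨x, n, rfl⟩, r, ⟨y, m, rfl⟩, hqr⟩
    have h2n : ((2:ℚ) ^ n) ≠ 0 := by positivity
    have h2m : ((2:ℚ) ^ m) ≠ 0 := by positivity
    have hxy : (x * y : ℚ) = 2 ^ (n + m) := by
      field_simp at hqr
      rw [pow_add]
      linarith [hqr]
    have hxyZ : x * y = 2 ^ (n + m) := by exact_mod_cast hxy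
    have hdvd : x.natAbs ∣ 2 ^ (n + m) := by
      have : (x.natAbs : ℤ) ∣ 2 ^ (n + m) := by
        rw [Int.natAbs_dvd]
        exact Dvd.intro y hxyZ
      exact_mod_cast this
    obtain ⟨k, hk, hxk⟩ := (Nat.dvd_prime_pow Nat.prime_two).mp hdvd
    have hx : x = 2 ^ k ∨ x = -2 ^ k := by
      rcases Int.natAbs_eq x with h | h <;> [left; right] <;> rw [h, hxk] <;> push_cast <;> ring
    refine ⟨(k : ℤ) - n, ?_⟩
    have key : ((2:ℚ) ^ k) / 2 ^ n = 2 ^ ((k:ℤ) - n) := by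
      rw [zpow_sub₀ (by norm_num), zpow_natCast, zpow_natCast]
    rcases hx with rfl | rfl
    · left; push_cast; rw [← key]
    · right; push_cast; rw [← key]; ring
  · rintro ⟨n, h | h⟩
    · exact ⟨h ▸ inZHalf_zpow n, 2 ^ (-n), inZHalf_zpow (-n), by
        rw [h, ← zpow_add₀ (by norm_num : (2:ℚ) ≠ 0)]; simp⟩
    · exact ⟨h ▸ inZHalf_neg (inZHalf_zpow n), -2 ^ (-n), inZHalf_neg (inZHalf_zpow (-n)), by
        rw [h, neg_mul_neg, ← zpow_add₀ (by norm_num : (2:ℚ) ≠ 0)]; simp⟩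

lemma int_key (s t : ℤ) (hs : s = 1 ∨ s = -1) (ht : t = 1 ∨ t = -1) (d e : ℕ)
    (h : s + t * 2 ^ d = 2 ^ e) :
    (s = 1 ∧ t = 1 ∧ d = 0 ∧ e = 1) ∨ (s = -1 ∧ t = 1 ∧ d = 1 ∧ e = 0) := by
  have hd1 : d ≠ 0 → (2:ℤ) ∣ 2 ^ d := fun h => dvd_pow_self 2 h
  have he1 : e ≠ 0 → (2:ℤ) ∣ 2 ^ e := fun h => dvd_pow_self 2 h
  have hd2 : (2:ℤ) ≤ d → (4:ℤ) ∣ 2 ^ d := by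
    intro h
    calc (4:ℤ) = 2 ^ 2 := by norm_num
    _ ∣ 2 ^ d := pow_dvd_pow 2 (by exact_mod_cast h)
  have he2 : (2:ℤ) ≤ e → (4:ℤ) ∣ 2 ^ e := by
    intro h
    calc (4:ℤ) = 2 ^ 2 := by norm_num
    _ ∣ 2 ^ e := pow_dvd_pow 2 (by exact_mod_cast h)
  have hdp : (1:ℤ) ≤ 2 ^ d := one_le_pow₀ (by norm_num)
  have hep : (1:ℤ) ≤ 2 ^ e := one_le_pow₀ (by norm_num)
  rcases hs with rfl | rfl <;> rcases ht with rfl | rfl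
  · left
    have hd : d = 0 := by
      by_contra hd
      have h1 := hd1 hd
      have he : e ≠ 0 := by rintro rfl; simp at h
      have h2 := he1 he
      omega
    subst hd
    simp at h ⊢
    have : e = 1 := by
      by_contra he
      rcases Nat.lt_or_ge e 2 with h2 | h2
      · interval_cases e <;> omega
      · have := he2 (by exact_mod_cast h2); omega
    omega
  · omega
  · right
    have he : e = 0 := by
      by_contra he
      have h2 := he1 he
      have hd : d ≠ 0 := by rintro rfl; simp at h; omega
      have h1 := hd1 hd
      omega
    subst he
    simp at h ⊢
    have : d = 1 := by
      by_contra hd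
      rcases Nat.lt_or_ge d 2 with h2 | h2
      · interval_cases d <;> omega
      · have := hd2 (by exact_mod_cast h2); omega
    omega
  · omega

lemma aux (s t : ℤ) (hs : s = 1 ∨ s = -1) (ht : t = 1 ∨ t = -1) (m n : ℤ)
    (hmn : m ≤ n) (h : (s:ℚ) * 2 ^ m + (t:ℚ) * 2 ^ n = 1) :
    ((s:ℚ) * 2 ^ m = -1 ∧ (t:ℚ) * 2 ^ n = 2) ∨
      ((s:ℚ) * 2 ^ m = 1/2 ∧ (t:ℚ) * 2 ^ n = 1/2) := by
  set d : ℕ := (n - m).toNat with hd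
  have hn : n = m + (d : ℤ) := by omega
  have h2 : (2:ℚ) ≠ 0 := by norm_num
  have hfac : ((s + t * 2 ^ d : ℤ) : ℚ) * 2 ^ m = 1 := by
    rw [hn, zpow_add₀ h2, zpow_natCast] at h
    push_cast
    linarith [h]
  set z : ℤ := s + t * 2 ^ d with hz
  have hzne : (z:ℚ) ≠ 0 := by
    intro h0
    rw [h0, zero_mul] at hfac
    norm_num at hfac
  have hzne' : z ≠ 0 := by exact_mod_cast hzne
  have hm : m ≤ 0 := by
    by_contra hm
    push_neg at hm
    have h1 : (1:ℚ) ≤ |(z:ℚ)| := by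
      rw [← Int.cast_abs]
      exact_mod_cast Int.one_le_abs hzne'
    have h2m : (2:ℚ) ≤ 2 ^ m := by
      calc (2:ℚ) = 2 ^ (1:ℤ) := by norm_num
      _ ≤ 2 ^ m := by
        apply zpow_le_zpow_right₀ (by norm_num) (by omega)
    have h3 : (2:ℚ) ≤ |(z:ℚ)| * 2 ^ m := by
      calc (2:ℚ) = 1 * 2 := by ring
      _ ≤ |(z:ℚ)| * 2 ^ m := by
        apply mul_le_mul h1 h2m (by norm_num) (by positivity)
    have h4 : |(z:ℚ)| * 2 ^ m = 1 := by
      have hp : (0:ℚ) < 2 ^ m := by positivity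
      rw [← abs_of_pos hp, ← abs_mul, hfac, abs_one]
    linarith
  set e : ℕ := (-m).toNat with he
  have hme : m = -(e : ℤ) := by omega
  have hze : z = 2 ^ e := by
    have : (z:ℚ) = 2 ^ (e:ℤ) := by
      rw [hme] at hfac
      rw [zpow_neg] at hfac
      field_simp at hfac
      rw [hfac, zpow_natCast]
    exact_mod_cast this
  obtain ⟨hs1, ht1, hd1, he1⟩ | ⟨hs1, ht1, hd1, he1⟩ :=
      int_key s t hs ht d e (by rw [← hz]; exact hze)
  · right
    have hm1 : m = -1 := by omega
    have hn1 : n = -1 := by omega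
    rw [hs1, ht1, hm1, hn1]
    norm_num [zpow_neg]
  · left
    have hm1 : m = 0 := by omega
    have hn1 : n = 1 := by omega
    rw [hs1, ht1, hm1, hn1]
    norm_num

lemma to_sign (a : ℚ) (m : ℤ) (h : a = 2 ^ m ∨ a = -2 ^ m) :
    ∃ s : ℤ, (s = 1 ∨ s = -1) ∧ a = (s:ℚ) * 2 ^ m := by
  rcases h with rfl | rfl
  · exact ⟨1, Or.inl rfl, by push_cast; ring⟩
  · exact ⟨-1, Or.inr rfl, by push_cast; ring⟩


/-- The solutions of the unit equation `a + b = 1` in `ℤ[1/2]` are exactly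
`(2, -1)`, `(-1, 2)` and `(1/2, 1/2)`. -/
theorem stmt_3 (a b : ℚ) :
    (IsUnitZHalf a ∧ IsUnitZHalf b ∧ a + b = 1) ↔
      ((a, b) = ((2 : ℚ), (-1 : ℚ)) ∨ (a, b) = ((-1 : ℚ), (2 : ℚ)) ∨
        (a, b) = ((1/2 : ℚ), (1/2 : ℚ))) := by
  constructor
  · rintro ⟨hua, hub, hab⟩
    obtain ⟨m, ha⟩ := (unit_iff a).mp hua
    obtain ⟨n, hb⟩ := (unit_iff b).mp hub
    obtain ⟨s, hs, rfl⟩ := to_sign a m ha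
    obtain ⟨t, ht, rfl⟩ := to_sign b n hb
    rcases le_total m n with hmn | hmn
    · rcases aux s t hs ht m n hmn hab with ⟨h1, h2⟩ | ⟨h1, h2⟩
      · right; left; rw [h1, h2]
      · right; right; rw [h1, h2]
    · rcases aux t s ht hs n m hmn (by linarith) with ⟨h1, h2⟩ | ⟨h1, h2⟩
      · left; rw [h1, h2]
      · right; right; rw [h1, h2]
  · have u2 : IsUnitZHalf 2 := ⟨⟨2, 0, by norm_num⟩, 1/2, ⟨1, 1, by norm_num⟩, by norm_num⟩
    have un1 : IsUnitZHalf (-1) := ⟨⟨-1, 0, by norm_num⟩, -1, ⟨-1, 0, by norm_num⟩, by norm_num⟩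
    have uh : IsUnitZHalf (1/2) := ⟨⟨1, 1, by norm_num⟩, 2, ⟨2, 0, by norm_num⟩, by norm_num⟩
    rintro (h | h | h) <;> rw [Prod.mk.injEq] at h <;> obtain ⟨rfl, rfl⟩ := h
    · exact ⟨u2, un1, by norm_num⟩
    · exact ⟨un1, u2, by norm_num⟩
    · exact ⟨uh, uh, by norm_num⟩
end

section
/- Let p ≥ 5 be a prime. Then in 𝔽_p[X] one has Σ_{k=1}^{p-1} k² X^k = X(X+1)(X-1)^{p-3}. -/
open Polynomial

lemma aux_sum_sq (R : Type*) [CommRing R] (n : ℕ) :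
    (X - 1) ^ 3 * ∑ k ∈ Finset.Icc 1 n, C ((k : R) ^ 2) * X ^ k =
      C ((n : R) ^ 2) * X ^ (n + 3) - C (2 * (n : R) ^ 2 + 2 * n - 1) * X ^ (n + 2)
        + C (((n : R) + 1) ^ 2) * X ^ (n + 1) - X ^ 2 - X := by
  induction n with
  | zero =>
      rw [show Finset.Icc 1 0 = (∅ : Finset ℕ) from rfl, Finset.sum_empty, mul_zero]
      simp only [Nat.cast_zero]
      simp only [map_add, map_sub, map_mul, map_pow, map_one, map_ofNat, map_zero]
      ring
  | succ n ih =>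
      rw [Finset.sum_Icc_succ_top (by omega), mul_add, ih]
      push_cast
      simp only [map_add, map_sub, map_mul, map_pow, map_one, map_ofNat]
      ring

/-- For a prime `p ≥ 5`, in `𝔽_p[X]`:
`Σ_{k=1}^{p-1} k² X^k = X (X+1) (X-1)^{p-3}`. -/
theorem stmt_7 (p : ℕ) (hp : p.Prime) (hp5 : 5 ≤ p) :
    ∑ k ∈ Finset.Icc 1 (p - 1), C ((k : ZMod p) ^ 2) * X ^ k =
      X * (X + 1) * (X - 1) ^ (p - 3) := by
  haveI := Fact.mk hp
  have hX1 : (X - 1 : (ZMod p)[X]) ^ 3 ≠ 0 := by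
    apply pow_ne_zero
    have : (X - 1 : (ZMod p)[X]) = X - C 1 := by simp
    rw [this]
    exact X_sub_C_ne_zero 1
  apply mul_left_cancel₀ hX1
  rw [aux_sum_sq]
  have hcast : ((p - 1 : ℕ) : ZMod p) = -1 := by
    have : ((p - 1 : ℕ) : ZMod p) = (p : ZMod p) - 1 := by
      push_cast [Nat.cast_sub (by omega : 1 ≤ p)]; ring
    rw [this, ZMod.natCast_self]; ring
  rw [hcast]
  have h1 : p - 1 + 3 = p + 2 := by omega
  have h2 : p - 1 + 2 = p + 1 := by omega
  have h3 : p - 1 + 1 = p := by omega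
  rw [h1, h2, h3]
  have hfrob : (X - 1 : (ZMod p)[X]) ^ p = X ^ p - 1 := by
    simpa using sub_pow_char (X : (ZMod p)[X]) 1
  have hsplit : (X - 1 : (ZMod p)[X]) ^ 3 * (X - 1) ^ (p - 3) = (X - 1) ^ p := by
    rw [← pow_add]; congr 1; omega
  rw [show (X - 1 : (ZMod p)[X]) ^ 3 * (X * (X + 1) * (X - 1) ^ (p - 3))
      = X * (X + 1) * ((X - 1) ^ 3 * (X - 1) ^ (p - 3)) by ring, hsplit, hfrob]
  simp only [map_add, map_sub, map_mul, map_pow, map_one, map_ofNat, map_neg]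
  ring
end

section
/- Let K be a number field whose group of roots of unity μ(K) has order m, let N ≥ 1, and let G = Gal(K(μ_N)/K) act on the group μ_N of N-th roots of unity. Then the group cohomology H¹(G, μ_N) is annihilated by 2m. -/
set_option synthInstance.maxHeartbeats 1000000
set_option maxHeartbeats 1000000

theorem zmod_dvd_aux (N : ℕ) [NeZero N] (m : ℕ) (δ : ZMod N)
    (h : ∀ x : ZMod N, δ * x = 0 → (m : ZMod N) * x = 0) : δ ∣ (m : ZMod N) := by
  have hN : N ≠ 0 := NeZero.ne N
  set a := δ.val with ha
  set d := Nat.gcd a N with hd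
  have hdN : d ∣ N := Nat.gcd_dvd_right a N
  have hda : d ∣ a := Nat.gcd_dvd_left a N
  have hdpos : 0 < d := Nat.gcd_pos_of_pos_right _ (Nat.pos_of_ne_zero hN)
  have hδ : δ = (a : ZMod N) := by simp [ha]
  have h1 : δ * ((N / d : ℕ) : ZMod N) = 0 := by
    rw [hδ, ← Nat.cast_mul]
    obtain ⟨a', ha'⟩ := hda
    have hv : a * (N / d) = N * a' := by
      rw [ha', mul_right_comm, Nat.mul_div_cancel' hdN]
    rw [hv, Nat.cast_mul, ZMod.natCast_self, zero_mul]
  have h2 := h _ h1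
  rw [← Nat.cast_mul, ZMod.natCast_eq_zero_iff] at h2
  have hNd : N = d * (N / d) := (Nat.mul_div_cancel' hdN).symm
  have hNdpos : 0 < N / d := Nat.div_pos (Nat.le_of_dvd (Nat.pos_of_ne_zero hN) hdN) hdpos
  have hdm : d ∣ m := by
    have : d * (N / d) ∣ m * (N / d) := hNd ▸ h2
    exact (Nat.mul_dvd_mul_iff_right hNdpos).mp this
  have hbez : (d : ZMod N) = δ * ((Nat.gcdA a N : ℤ) : ZMod N) := by
    have := Nat.gcd_eq_gcd_ab a N
    have h3 : ((d : ℤ) : ZMod N) = ((a * Nat.gcdA a N + N * Nat.gcdB a N : ℤ) : ZMod N) := by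
      rw [← this]
    push_cast at h3
    rw [ZMod.natCast_self] at h3
    simp only [zero_mul, add_zero] at h3
    rw [hδ]
    exact h3
  have : δ ∣ (d : ZMod N) := ⟨_, hbez⟩
  exact this.trans (by exact_mod_cast (Nat.cast_dvd_cast (α := ZMod N) hdm))

theorem zmod_mem_span_aux (N : ℕ) [NeZero N] (m : ℕ) (S : Set (ZMod N))
    (h : ∀ x : ZMod N, (∀ s ∈ S, s * x = 0) → (m : ZMod N) * x = 0) :
    (m : ZMod N) ∈ Ideal.span S := by
  have : IsPrincipalIdealRing (ZMod N) :=
    IsPrincipalIdealRing.of_surjective (Int.castRingHom (ZMod N)) ZMod.intCast_surjective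
  obtain ⟨δ, hδ⟩ := (this.principal (Ideal.span S)).principal
  rw [Ideal.submodule_span_eq] at hδ
  rw [hδ]
  rw [Ideal.mem_span_singleton]
  apply zmod_dvd_aux
  intro x hx
  apply h
  intro s hs
  have : s ∈ Ideal.span {δ} := hδ ▸ Ideal.subset_span hs
  obtain ⟨c, rfl⟩ := Ideal.mem_span_singleton.mp this
  rw [mul_comm δ c, mul_assoc, hx, mul_zero]

theorem pow_torsionOrder_eq_one_aux (K : Type*) [Field K] [NumberField K] (u : K) (n : ℕ)
    (hn : n ≠ 0) (hu : u ^ n = 1) :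
    u ^ ((NumberField.Units.torsionOrder K : ℕ)) = 1 := by
  have hInt : IsIntegral ℤ u :=
    IsIntegral.of_pow (Nat.pos_of_ne_zero hn) (hu ▸ isIntegral_one)
  set o : NumberField.RingOfIntegers K := ⟨u, (mem_integralClosure_iff ℤ K).mpr hInt⟩ with ho
  have hcoe : (o : K) = u := rfl
  have hon : o ^ n = 1 := by
    ext
    push_cast [hcoe]
    exact hu
  have hou : IsUnit o := IsUnit.of_pow_eq_one hon hn
  have houn : hou.unit ^ n = 1 := by
    ext
    push_cast [hou.unit_spec]
    exact_mod_cast congrArg (algebraMap (NumberField.RingOfIntegers K) K) hon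
  have hmem : hou.unit ∈ NumberField.Units.torsion K := by
    rw [NumberField.Units.torsion, CommGroup.mem_torsion, isOfFinOrder_iff_pow_eq_one]
    exact ⟨n, Nat.pos_of_ne_zero hn, houn⟩
  have hfin : (⟨hou.unit, hmem⟩ : NumberField.Units.torsion K) ^
      (Nat.card (NumberField.Units.torsion K)) = 1 := pow_card_eq_one'
  have h1 : hou.unit ^ ((NumberField.Units.torsionOrder K : ℕ)) = 1 := by
    have := congrArg Subtype.val hfin
    simp only [SubmonoidClass.coe_pow, OneMemClass.coe_one] at this
    rw [show ((NumberField.Units.torsionOrder K : ℕ)) = Nat.card (NumberField.Units.torsion K) from rfl]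
    exact this
  have h2 : o ^ ((NumberField.Units.torsionOrder K : ℕ)) = 1 := by
    have := congrArg Units.val h1
    simpa [hou.unit_spec] using this
  calc u ^ _ = ((o ^ ((NumberField.Units.torsionOrder K : ℕ)) : NumberField.RingOfIntegers K) : K) := by
        push_cast [hcoe]; ring
    _ = 1 := by rw [h2]; simp

/-- Let `K` be a number field whose group of roots of unity has order `m`,
let `N ≥ 1`, and let `G = Gal(K(μ_N)/K)` act on `μ_N`. Then `H¹(G, μ_N)`
is annihilated by `2m`: every cocycle `f : G → μ_N`, raised to the power
`2m`, is a coboundary. -/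
theorem stmt_15 (K : Type*) [Field K] [NumberField K] (N : ℕ+)
    (m : ℕ) (hm : m = (NumberField.Units.torsionOrder K : ℕ))
    (f : (CyclotomicField N K ≃ₐ[K] CyclotomicField N K) → (CyclotomicField N K)ˣ)
    (hmem : ∀ g, f g ∈ rootsOfUnity N (CyclotomicField N K))
    (hcocycle : ∀ g h, f (g * h) = f g * g • f h) :
    ∃ ζ : (CyclotomicField N K)ˣ, ζ ∈ rootsOfUnity N (CyclotomicField N K) ∧
      ∀ g, (f g) ^ (2 * m) = ζ⁻¹ * g • ζ := by
  haveI hNZ : NeZero ((N : ℕ)) := ⟨N.pos.ne'⟩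
  set L := CyclotomicField N K with hLdef
  haveI : IsGalois K L := IsCyclotomicExtension.isGalois {(N : ℕ)} K L
  haveI : FiniteDimensional K L := IsCyclotomicExtension.finiteDimensional {(N : ℕ)} K L
  have hζ : IsPrimitiveRoot (IsCyclotomicExtension.zeta N K L) (N : ℕ) :=
    IsCyclotomicExtension.zeta_spec N K L
  set ζu : Lˣ := (hζ.isUnit N.ne_zero).unit with hζudef
  have hζu : IsPrimitiveRoot ζu (N : ℕ) := hζ.isUnit_unit N.ne_zero
  have horder : orderOf ζu = (N : ℕ) := hζu.eq_orderOf.symm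
  have hζuN : ζu ^ (N : ℕ) = 1 := hζu.pow_eq_one
  have hn : Nat.card (rootsOfUnity N L) = (N : ℕ) := hζ.card_rootsOfUnity
  set χ : (L ≃ₐ[K] L) → ZMod N := fun g =>
    ((modularCyclotomicCharacter L hn (g : L ≃+* L)) : ZMod N) with hχdef
  set E : ZMod N → Lˣ := fun x => ζu ^ x.val with hEdef
  -- basic lemmas about E
  have E_pow : ∀ a : ℕ, ζu ^ a = E ((a : ZMod N)) := by
    intro a
    show _ = ζu ^ _
    rw [pow_eq_pow_iff_modEq, horder, ZMod.val_natCast]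
    exact (Nat.mod_modEq a N).symm
  have E_zero : E 0 = 1 := by
    show ζu ^ (0 : ZMod N).val = 1
    simp [ZMod.val_zero]
  have E_mem : ∀ x, E x ∈ rootsOfUnity N L := by
    intro x
    rw [mem_rootsOfUnity]
    show (ζu ^ x.val) ^ (N : ℕ) = 1
    rw [← pow_mul, mul_comm, pow_mul, hζuN, one_pow]
  have E_inj : Function.Injective E := by
    intro x y hxy
    have hmod : x.val ≡ y.val [MOD (N : ℕ)] := by
      have hpow : ζu ^ x.val = ζu ^ y.val := hxy
      rw [pow_eq_pow_iff_modEq, horder] at hpow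
      exact hpow
    have := hmod.eq_of_lt_of_lt (ZMod.val_lt x) (ZMod.val_lt y)
    exact ZMod.val_injective _ this
  have E_add : ∀ x y, E (x + y) = E x * E y := by
    intro x y
    have hxy : ((x.val + y.val : ℕ) : ZMod N) = x + y := by
      push_cast [ZMod.natCast_val, ZMod.cast_id]
      ring
    rw [← hxy, ← E_pow, pow_add]
  have E_pow_nat : ∀ (x : ZMod N) (k : ℕ), E x ^ k = E ((k : ZMod N) * x) := by
    intro x k
    have hxk : ((x.val * k : ℕ) : ZMod N) = (k : ZMod N) * x := by
      push_cast [ZMod.natCast_val, ZMod.cast_id]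
      ring
    rw [← hxk, ← E_pow, pow_mul]
  have hζu_mem : ζu ∈ rootsOfUnity N L := by
    rw [mem_rootsOfUnity]
    exact hζuN
  have hgζu : ∀ g : L ≃ₐ[K] L, g • ζu = ζu ^ ((χ g).val) := by
    intro g
    ext
    exact modularCyclotomicCharacter.spec L hn (g : L ≃+* L) hζu_mem
  have E_smul : ∀ (g : L ≃ₐ[K] L) (x : ZMod N), g • E x = E (χ g * x) := by
    intro g x
    show g • (ζu ^ x.val) = _
    rw [smul_pow', hgζu, ← pow_mul, E_pow]
    congr 1
    push_cast [ZMod.natCast_val, ZMod.cast_id]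
    ring
  have E_surj : ∀ u : Lˣ, u ∈ rootsOfUnity N L → ∃ x, E x = u := by
    intro u hu
    rw [← hζu.zpowers_eq] at hu
    obtain ⟨k, hk⟩ := Subgroup.mem_zpowers_iff.mp hu
    refine ⟨(k : ZMod N), ?_⟩
    rw [← hk]
    show ζu ^ ((k : ZMod N)).val = ζu ^ k
    rw [show ζu ^ ((k : ZMod N)).val = ζu ^ (((k : ZMod N).val : ℤ)) from (zpow_natCast _ _).symm,
      zpow_eq_zpow_iff_modEq, horder]
    apply (ZMod.intCast_eq_intCast_iff _ _ _).mp
    push_cast [ZMod.natCast_val, ZMod.cast_id]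
    rfl
  -- the logarithm of f
  choose cc hcc using fun g => E_surj (f g) (hmem g)
  have hcc' : ∀ g h, cc (g * h) = cc g + χ g * cc h := by
    intro g h
    apply E_inj
    rw [hcc (g * h), hcocycle g h, ← hcc g, ← hcc h, E_smul, ← E_add]
  -- commutativity of the Galois group
  have hcomm : ∀ g h : (L ≃ₐ[K] L), g * h = h * g := by
    intro g h
    ext x
    have hx := IsCyclotomicExtension.adjoin_roots (S := {(N : ℕ)}) (A := K) (B := L) x
    rw [AlgEquiv.mul_apply, AlgEquiv.mul_apply]
    induction hx using Algebra.adjoin_induction with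
    | mem b hb =>
      obtain ⟨n, hnS, -, hbn⟩ := hb
      rw [Set.mem_singleton_iff] at hnS
      rw [hnS] at hbn
      have hbu : IsUnit b := IsUnit.of_pow_eq_one hbn N.pos.ne'
      have hbmem : hbu.unit ∈ rootsOfUnity N L := by
        rw [mem_rootsOfUnity]
        ext
        push_cast [hbu.unit_spec]
        exact hbn
      have hone : ∀ σ : L ≃ₐ[K] L, σ b = b ^ ((χ σ).val) := by
        intro σ
        have := modularCyclotomicCharacter.spec L hn (σ : L ≃+* L) hbmem
        simpa [hbu.unit_spec] using this
      calc g (h b) = b ^ ((χ g).val * (χ h).val) := by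
            rw [hone h, map_pow, hone g, ← pow_mul]
        _ = b ^ ((χ h).val * (χ g).val) := by rw [Nat.mul_comm]
        _ = h (g b) := by rw [hone g, map_pow, hone h, ← pow_mul]
    | algebraMap r => simp
    | add u v hu hv ihu ihv => rw [map_add, map_add, ihu, ihv, map_add, map_add]
    | mul u v hu hv ihu ihv => rw [map_mul, map_mul, ihu, ihv, map_mul, map_mul]
  have hsym : ∀ g h, (χ g - 1) * cc h = (χ h - 1) * cc g := by
    intro g h
    have hrel := hcc' g h
    rw [hcomm g h, hcc' h g] at hrel
    linear_combination -hrel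
  -- fixed-point lemma
  have hfix : ∀ x : ZMod N, (∀ g : L ≃ₐ[K] L, (χ g - 1) * x = 0) → (m : ZMod N) * x = 0 := by
    intro x hx
    have hfixed : ∀ g : L ≃ₐ[K] L, g ((E x : Lˣ) : L) = ((E x : Lˣ) : L) := by
      intro g
      have h1 : χ g * x = x := by
        have := hx g
        rwa [sub_mul, one_mul, sub_eq_zero] at this
      have h2 := E_smul g x
      rw [h1] at h2
      calc g ((E x : Lˣ) : L) = ((g • E x : Lˣ) : L) := rfl
        _ = _ := by rw [h2]
    have hbot : ((E x : Lˣ) : L) ∈ (⊥ : IntermediateField K L) := by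
      rw [← IsGalois.fixedField_fixingSubgroup (⊥ : IntermediateField K L)]
      rintro ⟨g, hg⟩
      exact hfixed g
    obtain ⟨u, hu⟩ := IntermediateField.mem_bot.mp hbot
    have huN : u ^ (N : ℕ) = 1 := by
      apply (algebraMap K L).injective
      rw [map_pow, hu, map_one]
      have h3 : ((E x) ^ (N : ℕ) : Lˣ) = 1 := (mem_rootsOfUnity _ _).mp (E_mem x)
      have h4 := congrArg Units.val h3
      push_cast at h4
      exact h4
    have hum : u ^ m = 1 := by
      rw [hm]
      exact pow_torsionOrder_eq_one_aux K u N N.pos.ne' huN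
    have hExm : (E x) ^ m = 1 := by
      ext
      push_cast
      rw [← hu, ← map_pow, hum, map_one]
    have h4 : E ((m : ZMod N) * x) = E 0 := by
      rw [← E_pow_nat, hExm, E_zero]
    exact E_inj h4
  -- the span argument
  have hspan : ((m : ZMod N)) ∈ Ideal.span (Set.range fun g : L ≃ₐ[K] L => χ g - 1) := by
    apply zmod_mem_span_aux
    intro x hxs
    apply hfix
    intro g
    exact hxs _ ⟨g, rfl⟩
  obtain ⟨c, hsupp, hsum⟩ := Submodule.mem_span_set.mp hspan
  have hpick : ∀ i ∈ c.support, ∃ g : L ≃ₐ[K] L, χ g - 1 = i := by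
    intro i hi
    exact hsupp hi
  choose gg hgg using hpick
  set y : ZMod N := c.support.attach.sum (fun i => c i.1 * cc (gg i.1 i.2)) with hydef
  have hkey : ∀ h, (χ h - 1) * y = (m : ZMod N) * cc h := by
    intro h
    rw [hydef, Finset.mul_sum]
    have hterm : ∀ i ∈ c.support.attach,
        (χ h - 1) * (c i.1 * cc (gg i.1 i.2)) = (c i.1 * i.1) * cc h := by
      intro i _
      calc (χ h - 1) * (c i.1 * cc (gg i.1 i.2))
          = c i.1 * ((χ h - 1) * cc (gg i.1 i.2)) := by ring
        _ = c i.1 * ((χ (gg i.1 i.2) - 1) * cc h) := by rw [hsym h (gg i.1 i.2)]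
        _ = (c i.1 * (χ (gg i.1 i.2) - 1)) * cc h := by ring
        _ = (c i.1 * i.1) * cc h := by rw [hgg i.1 i.2]
    rw [Finset.sum_congr rfl hterm, ← Finset.sum_mul]
    congr 1
    have : (c.support.attach.sum fun i => c i.1 * i.1) = c.support.sum (fun i => c i * i) := by
      rw [← Finset.sum_attach c.support (fun i => c i * i)]
    rw [this, ← hsum]
    rw [Finsupp.sum]
    apply Finset.sum_congr rfl
    intro i _
    rw [smul_eq_mul]
  -- conclusion
  refine ⟨E (2 * y), E_mem _, fun g => ?_⟩
  rw [← hcc g, E_smul, E_pow_nat]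
  have harg : χ g * (2 * y) = 2 * y + ((2 * m : ℕ) : ZMod N) * cc g := by
    push_cast
    linear_combination 2 * hkey g
  rw [harg, E_add, inv_mul_cancel_left]
end

section
/- Let p be an odd prime, let z ∈ ℤ_p be a root of unity with z ≢ 0, 1 (mod p), and suppose p ≥ 5 and Σ_{k=1}^{p-1} k² z̄^k = 0 in 𝔽_p, where z̄ is the reduction of z modulo p. Then z = -1. -/
lemma sum_sq_identity {R : Type*} [CommRing R] (x : R) (n : ℕ) :
    (x - 1) ^ 3 * ∑ k ∈ Finset.range n, (k : R) ^ 2 * x ^ k =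
      (((n : R) - 1) ^ 2 * x ^ 2 - (2 * (n : R) ^ 2 - 2 * (n : R) - 1) * x + (n : R) ^ 2)
        * x ^ n - x ^ 2 - x := by
  induction n with
  | zero => simp
  | succ n ih =>
    rw [Finset.sum_range_succ, mul_add, ih]
    push_cast
    ring

lemma zmod_sum_root (p : ℕ) [Fact p.Prime] (x : ZMod p)
    (h0 : x ≠ 0) (h1 : x ≠ 1)
    (hsum : ∑ k ∈ Finset.Icc 1 (p - 1), (k : ZMod p) ^ 2 * x ^ k = 0) :
    x = -1 := by
  have hp : p.Prime := Fact.out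
  have hp1 : 1 ≤ p := hp.one_lt.le
  have hIcc : Finset.Icc 1 (p - 1) = Finset.Ico 1 p := by
    rw [← Finset.Ico_add_one_right_eq_Icc]; congr 1; omega
  have hrange : ∑ k ∈ Finset.range p, (k : ZMod p) ^ 2 * x ^ k =
      ∑ k ∈ Finset.Icc 1 (p - 1), (k : ZMod p) ^ 2 * x ^ k := by
    rw [hIcc, Finset.range_eq_Ico, Finset.sum_eq_sum_Ico_succ_bot hp.pos]
    simp
  have key := sum_sq_identity x p
  rw [hrange, hsum, mul_zero] at key
  have hpz : ((p : ZMod p)) = 0 := ZMod.natCast_self p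
  rw [hpz, ZMod.pow_card] at key
  have : x * (x - 1) * (x + 1) = 0 := by linear_combination -key
  rcases mul_eq_zero.1 this with h | h
  · rcases mul_eq_zero.1 h with h | h
    · exact absurd h h0
    · exact absurd (by linear_combination h) h1
  · linear_combination h

variable {p : ℕ} [Fact p.Prime]

lemma padic_p_ne_zero : (p : ℤ_[p]) ≠ 0 := by
  have hp : p.Prime := Fact.out
  exact_mod_cast Nat.cast_ne_zero.2 hp.ne_zero

lemma padic_unipotent_p (hp2 : p ≠ 2) (y : ℤ_[p]) (hy : (p : ℤ_[p]) ∣ y - 1)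
    (h : y ^ p = 1) : y = 1 := by
  have hp : p.Prime := Fact.out
  have hp3 : 3 ≤ p := by rcases hp.two_le.lt_or_eq with h' | h'; omega; omega
  by_contra hne
  set t : ℤ_[p] := y - 1 with ht
  have ht0 : t ≠ 0 := sub_ne_zero.2 hne
  have hyt : y = t + 1 := by rw [ht]; ring
  have hexp : y ^ p = (∑ k ∈ Finset.range p, t ^ (k + 1) * (p.choose (k + 1) : ℤ_[p])) + 1 := by
    rw [hyt, add_pow, Finset.sum_range_succ']
    simp
  have hu : (∑ k ∈ Finset.range p, t ^ (k + 1) * (p.choose (k + 1) : ℤ_[p])) =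
      t * ∑ k ∈ Finset.range p, t ^ k * (p.choose (k + 1) : ℤ_[p]) := by
    rw [Finset.mul_sum]
    refine Finset.sum_congr rfl fun k _ => by ring
  set u : ℤ_[p] := ∑ k ∈ Finset.range p, t ^ k * (p.choose (k + 1) : ℤ_[p]) with hud
  have hu0 : u = 0 := by
    have htu : t * u = 0 := by
      have : (∑ k ∈ Finset.range p, t ^ (k + 1) * (p.choose (k + 1) : ℤ_[p])) = 0 := by
        have h2 := hexp.symm.trans h
        rwa [add_eq_right] at h2
      rw [← hu, this]
    exact (mul_eq_zero.1 htu).resolve_left ht0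
  -- split off the k = 0 term of u, which is p
  have hsplit : u = (∑ k ∈ Finset.range (p - 1), t ^ (k + 1) * (p.choose (k + 2) : ℤ_[p]))
      + (p : ℤ_[p]) := by
    obtain ⟨q, hq⟩ : ∃ q, p = q + 1 := ⟨p - 1, by omega⟩
    rw [hud]
    subst hq
    rw [Finset.sum_range_succ']
    simp [Nat.choose_one_right]
  have hdvd : (p : ℤ_[p]) ^ 2 ∣
      ∑ k ∈ Finset.range (p - 1), t ^ (k + 1) * (p.choose (k + 2) : ℤ_[p]) := by
    refine Finset.dvd_sum fun k hk => ?_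
    have hk' : k + 2 ≤ p := by
      have := Finset.mem_range.1 hk; omega
    by_cases hk2 : k + 2 = p
    · -- term is t^(k+1) with k+1 ≥ 2
      have h2 : 2 ≤ k + 1 := by omega
      have : (p : ℤ_[p]) ^ 2 ∣ t ^ (k + 1) := by
        calc (p : ℤ_[p]) ^ 2 ∣ t ^ 2 := by
              rw [sq, sq]; exact mul_dvd_mul hy hy
          _ ∣ t ^ (k + 1) := pow_dvd_pow t h2
      exact this.mul_right _
    · have hpc : p ∣ p.choose (k + 2) := hp.dvd_choose_self (by omega) (by omega)
      have : (p : ℤ_[p]) ^ 2 ∣ t ^ (k + 1) * (p.choose (k + 2) : ℤ_[p]) := by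
        rw [sq]
        exact mul_dvd_mul (hy.trans (dvd_pow_self t (by omega))) (Nat.cast_dvd_cast hpc)
      exact this
  have hpp : (p : ℤ_[p]) ^ 2 ∣ (p : ℤ_[p]) := by
    have : (p : ℤ_[p]) = -(∑ k ∈ Finset.range (p - 1),
        t ^ (k + 1) * (p.choose (k + 2) : ℤ_[p])) := by
      rw [eq_neg_iff_add_eq_zero, add_comm, ← hsplit, hu0]
    have h2 : (p : ℤ_[p]) ^ 2 ∣ -∑ k ∈ Finset.range (p - 1),
        t ^ (k + 1) * (p.choose (k + 2) : ℤ_[p]) := dvd_neg.2 hdvd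
    rwa [← this] at h2
  obtain ⟨c, hc⟩ := hpp
  have hcancel : (1 : ℤ_[p]) = (p : ℤ_[p]) * c := by
    refine mul_left_cancel₀ padic_p_ne_zero ?_
    rw [mul_one, ← mul_assoc, ← sq]
    exact hc
  have hnorm : (1 : ℝ) ≤ (p : ℝ)⁻¹ := by
    calc (1 : ℝ) = ‖(1 : ℤ_[p])‖ := by simp
      _ = ‖(p : ℤ_[p]) * c‖ := by rw [hcancel]
      _ = ‖(p : ℤ_[p])‖ * ‖c‖ := norm_mul _ _
      _ ≤ ‖(p : ℤ_[p])‖ * 1 := by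
          exact mul_le_mul_of_nonneg_left c.norm_le_one (norm_nonneg _)
      _ = (p : ℝ)⁻¹ := by rw [mul_one, PadicInt.norm_p]
  have hlt : (p : ℝ)⁻¹ < 1 := by
    rw [inv_lt_one_iff₀]
    right
    exact_mod_cast hp.one_lt
  linarith

lemma padic_unipotent_coprime (y : ℤ_[p]) (hy : (p : ℤ_[p]) ∣ y - 1)
    (m : ℕ) (hm : ¬ p ∣ m) (h : y ^ m = 1) : y = 1 := by
  have hgeom : (∑ i ∈ Finset.range m, y ^ i) * (y - 1) = 0 := by
    rw [geom_sum_mul, h, sub_self]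
  rcases mul_eq_zero.1 hgeom with hS | ht
  · exfalso
    have hSm : (∑ i ∈ Finset.range m, y ^ i) - (m : ℤ_[p])
        = ∑ i ∈ Finset.range m, (y ^ i - 1) := by
      rw [Finset.sum_sub_distrib, Finset.sum_const, Finset.card_range, nsmul_eq_mul, mul_one]
    have hdvd : (p : ℤ_[p]) ∣ ∑ i ∈ Finset.range m, (y ^ i - 1) := by
      refine Finset.dvd_sum fun i _ => ?_
      exact hy.trans (Dvd.intro_left _ (geom_sum_mul y i))
    rw [← hSm, hS, zero_sub] at hdvd
    have hdm : (p : ℤ_[p]) ∣ (m : ℤ_[p]) := (dvd_neg).1 hdvd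
    have : ‖((m : ℤ) : ℤ_[p])‖ < 1 := by
      rw [PadicInt.norm_lt_one_iff_dvd]
      exact_mod_cast hdm
    rw [PadicInt.norm_int_lt_one_iff_dvd] at this
    exact hm (by exact_mod_cast this)
  · exact sub_eq_zero.1 ht

lemma padic_torsion (hp2 : p ≠ 2) (m : ℕ) : 1 ≤ m → ∀ y : ℤ_[p],
    (p : ℤ_[p]) ∣ y - 1 → y ^ m = 1 → y = 1 := by
  induction m using Nat.strong_induction_on with
  | _ m ih =>
    intro hm y hy hym
    by_cases hpm : p ∣ m
    · obtain ⟨m', rfl⟩ := hpm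
      have hp : p.Prime := Fact.out
      have hm' : 1 ≤ m' := by
        rcases Nat.eq_zero_or_pos m' with h | h
        · subst h; simp at hm
        · exact h
      have hlt : m' < p * m' := by
        have := hp.two_le; nlinarith
      have hyp : (p : ℤ_[p]) ∣ y ^ p - 1 :=
        hy.trans (Dvd.intro_left _ (geom_sum_mul y p))
      have h1 : (y ^ p) ^ m' = 1 := by rw [← pow_mul]; exact hym
      have := ih m' hlt hm' (y ^ p) hyp h1
      exact padic_unipotent_p hp2 y hy this
    · exact padic_unipotent_coprime y hy m hpm hym


/-- Let `p ≥ 5` be an odd prime and `z ∈ ℤ_p` a root of unity whose reduction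
`z̄ ∈ 𝔽_p` satisfies `z̄ ≠ 0`, `z̄ ≠ 1` and `Σ_{k=1}^{p-1} k² z̄^k = 0`.
Then `z = -1`. -/
theorem stmt_17 (p : ℕ) [Fact p.Prime] (hp2 : p ≠ 2) (hp5 : 5 ≤ p)
    (z : ℤ_[p]) (hz : ∃ n : ℕ, 1 ≤ n ∧ z ^ n = 1)
    (h0 : PadicInt.toZMod z ≠ 0) (h1 : PadicInt.toZMod z ≠ 1)
    (hsum : ∑ k ∈ Finset.Icc 1 (p - 1),
        (k : ZMod p) ^ 2 * (PadicInt.toZMod z) ^ k = 0) :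
    z = -1 := by
  have hx : PadicInt.toZMod z = -1 := zmod_sum_root p _ h0 h1 hsum
  have hker : PadicInt.toZMod (-z - 1) = 0 := by
    rw [map_sub, map_neg, hx, map_one]
    ring
  have hdvd : (p : ℤ_[p]) ∣ (-z - 1) := by
    rw [← Ideal.mem_span_singleton, ← PadicInt.maximalIdeal_eq_span_p,
      ← PadicInt.ker_toZMod]
    exact RingHom.mem_ker.2 hker
  obtain ⟨n, hn, hzn⟩ := hz
  have hpow : (-z) ^ (2 * n) = 1 := by
    rw [pow_mul, show (-z) ^ 2 = z ^ 2 by ring, ← pow_mul, mul_comm, pow_mul, hzn, one_pow]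
  have := padic_torsion hp2 (2 * n) (by omega) (-z) hdvd hpow
  linear_combination -this
end
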